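/- Let G be a compact Lie group and let P be a p-discretization of a p-toral subgroup 𝐏 of G. Then the natural map Out_G(P) := N_G(P)/(C_G(P)·P) → N_G(𝐏)/(C_G(𝐏)·𝐏) =: Out_G(𝐏), induced by the inclusion N_G(P) ⊆ N_G(𝐏) (an element normalizing P normalizes its closure 𝐏, and C_G(P) = C_G(𝐏)), is a group isomorphism. -/

import Mathlib

open scoped Pointwise
open CategoryTheory

noncomputable section

/-- The Prüfer `p`-group `ℤ/p^∞`, realized as the subgroup of the circle group
consisting of the elements of `p`-power order. -/
def PruferGroup (p : ℕ) : Subgroup Circle where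
  carrier := {x | ∃ n : ℕ, x ^ p ^ n = 1}
  one_mem' := ⟨0, one_pow _⟩
  mul_mem' := by
    rintro a b ⟨n, hn⟩ ⟨m, hm⟩
    refine ⟨n + m, ?_⟩
    rw [mul_pow, pow_add, pow_mul, hn, one_pow, one_mul, mul_comm (p ^ n), pow_mul, hm, one_pow]
  inv_mem' := by
    rintro a ⟨n, hn⟩
    exact ⟨n, by rw [inv_pow, hn, inv_one]⟩

/-- A group is a discrete `p`-torus of rank `r` if it is isomorphic to `(ℤ/p^∞)^r`. -/
def IsDiscretePTorusOfRank (p r : ℕ) (T : Type*) [Group T] : Prop :=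
  Nonempty (T ≃* (Fin r → PruferGroup p))

/-- A group is discrete `p`-toral (of rank `r`, for some `r`) if it is an extension of a
discrete `p`-torus of rank `r` by a finite `p`-group. -/
def IsDiscretePToral (p : ℕ) (P : Type*) [Group P] : Prop :=
  ∃ (r : ℕ) (T : Subgroup P) (hT : T.Normal),
    IsDiscretePTorusOfRank p r T ∧
    (letI := hT; Finite (P ⧸ T) ∧ IsPGroup p (P ⧸ T))

/-- A topological group is a (continuous) torus of rank `r` if it is isomorphic, as a
topological group, to `(S¹)^r`. -/
def IsTorusOfRank (r : ℕ) (T : Type*) [Group T] [TopologicalSpace T] : Prop :=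
  ∃ e : T ≃* (Fin r → Circle), Continuous e ∧ Continuous e.symm

/-- A topological group is `p`-toral of rank `r` if it is a compact group which is an
extension of a torus of rank `r` (its identity component, the maximal torus) by a
finite `p`-group. -/
def IsPToral (p : ℕ) (P : Type*) [Group P] [TopologicalSpace P] [IsTopologicalGroup P] : Prop :=
  CompactSpace P ∧
    ∃ r : ℕ, IsTorusOfRank r (Subgroup.connectedComponentOfOne P) ∧
      ∃ hN : (Subgroup.connectedComponentOfOne P).Normal,
        letI := hN
        Finite (P ⧸ Subgroup.connectedComponentOfOne P) ∧
          IsPGroup p (P ⧸ Subgroup.connectedComponentOfOne P)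

/-- `P` is a maximal discrete `p`-toral subgroup of the subgroup `B`: it is a discrete
`p`-toral subgroup contained in `B`, maximal among discrete `p`-toral subgroups of `B`. -/
def IsMaxDiscretePToralIn (p : ℕ) {G : Type*} [Group G] (P B : Subgroup G) : Prop :=
  P ≤ B ∧ IsDiscretePToral p P ∧
    ∀ Q : Subgroup G, Q ≤ B → IsDiscretePToral p Q → P ≤ Q → Q = P

/-- `P` is a maximal discrete `p`-toral subgroup of `G`. -/
def IsMaxDiscretePToral (p : ℕ) {G : Type*} [Group G] (P : Subgroup G) : Prop :=
  IsMaxDiscretePToralIn p P ⊤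

/-- The image of a subgroup under the conjugation `c_g(x) = g⁻¹ x g`. -/
def conjSubgroup {G : Type*} [Group G] (g : G) (P : Subgroup G) : Subgroup G :=
  Subgroup.map ((MulAut.conj g⁻¹).toMonoidHom) P

/-- A `p`-toral subgroup of a topological group: a closed subgroup which is `p`-toral
as a topological group with the subspace topology. -/
def IsPToralSubgroup (p : ℕ) {G : Type*} [Group G] [TopologicalSpace G] [IsTopologicalGroup G]
    (P : Subgroup G) : Prop :=
  IsClosed (P : Set G) ∧ IsPToral p P

/-- A maximal `p`-toral subgroup of `G`. -/
def IsMaxPToralSubgroup (p : ℕ) {G : Type*} [Group G] [TopologicalSpace G] [IsTopologicalGroup G]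
    (S : Subgroup G) : Prop :=
  IsPToralSubgroup p S ∧ ∀ Q : Subgroup G, IsPToralSubgroup p Q → S ≤ Q → Q = S

/-- A discrete `p`-toral subgroup `P` of `G` is snugly embedded if it is a maximal
discrete `p`-toral subgroup of its closure. -/
def IsSnug (p : ℕ) {G : Type*} [Group G] [TopologicalSpace G] [IsTopologicalGroup G]
    (P : Subgroup G) : Prop :=
  IsMaxDiscretePToralIn p P P.topologicalClosure

/-- `P` is a `p`-discretization of the `p`-toral subgroup `𝐏` of `G`: a snugly embedded
discrete `p`-toral subgroup of `𝐏` whose closure equals `𝐏`; equivalently, a maximal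
discrete `p`-toral subgroup of `𝐏` whose closure equals `𝐏`. -/
def IsPDiscretizationOf (p : ℕ) {G : Type*} [Group G] [TopologicalSpace G] [IsTopologicalGroup G]
    (P Pbold : Subgroup G) : Prop :=
  P.topologicalClosure = Pbold ∧ IsMaxDiscretePToralIn p P Pbold



namespace OutIsoAux

open Subgroup

/-! ### Circle and Prüfer group lemmas -/

lemma circle_root (z : Circle) {n : ℕ} (hn : n ≠ 0) : ∃ w : Circle, w ^ n = z := by
  obtain ⟨w0, hw0⟩ := IsAlgClosed.exists_pow_nat_eq (z : ℂ) (Nat.pos_of_ne_zero hn)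
  have h1 : ‖w0‖ ^ n = 1 := by
    rw [← norm_pow, hw0, Circle.norm_coe]
  have habs : ‖w0‖ = 1 := by
    rcases lt_trichotomy ‖w0‖ 1 with h | h | h
    · have := pow_lt_one₀ (norm_nonneg _) h hn
      simp [h1] at this
    · exact h
    · have := one_lt_pow₀ h hn
      simp [h1] at this
  have hmem : w0 ∈ Submonoid.unitSphere ℂ :=
    mem_sphere_zero_iff_norm.mpr (by rw [habs])
  refine ⟨⟨w0, hmem⟩, Circle.coe_injective ?_⟩
  calc (((⟨w0, hmem⟩ : Circle) ^ n : Circle) : ℂ) = (Circle.coeHom ⟨w0, hmem⟩) ^ n := by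
        rfl
    _ = z := hw0

lemma circle_torsion_finite {n : ℕ} (hn : n ≠ 0) : {z : Circle | z ^ n = 1}.Finite := by
  have h1 : {w : ℂ | w ^ n = 1}.Finite := by
    apply Set.Finite.subset (Polynomial.nthRoots n (1 : ℂ)).toFinset.finite_toSet
    intro w hw
    rw [Finset.mem_coe, Multiset.mem_toFinset, Polynomial.mem_nthRoots (Nat.pos_of_ne_zero hn)]
    exact hw
  have : {z : Circle | z ^ n = 1} ⊆ ((↑) : Circle → ℂ) ⁻¹' {w : ℂ | w ^ n = 1} := by
    intro z hz
    show ((z : ℂ)) ^ n = 1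
    calc ((z : ℂ)) ^ n = ((z ^ n : Circle) : ℂ) := (map_pow Circle.coeHom z n).symm
      _ = 1 := by rw [hz]; rfl
  exact Set.Finite.subset (Set.Finite.preimage (Set.injOn_of_injective Circle.coe_injective) h1) this

lemma prufer_torsion {p : ℕ} (z : PruferGroup p) : ∃ m : ℕ, z ^ p ^ m = 1 := by
  obtain ⟨m, hm⟩ := z.2
  exact ⟨m, Subtype.ext (by simpa using hm)⟩

lemma prufer_root (p : ℕ) [Fact p.Prime] (z : PruferGroup p) {n : ℕ} (hn : n ≠ 0) :
    ∃ w : PruferGroup p, w ^ n = z := by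
  have hp : p.Prime := Fact.out
  obtain ⟨m, hm⟩ := z.2
  set a := n.factorization p with ha
  have hn' : p ^ a * (n / p ^ a) = n := Nat.ordProj_mul_ordCompl_eq_self n p
  set u := n / p ^ a with hu
  have hund : ¬ p ∣ u := Nat.not_dvd_ordCompl hp hn
  set M := a + m + 1 with hM
  obtain ⟨w0, hw0⟩ := circle_root (z : Circle) (n := p ^ a) (pow_ne_zero _ hp.ne_zero)
  have hw0t : w0 ^ p ^ M = 1 := by
    have hexp : p ^ M = p ^ a * p ^ m * p := by rw [hM, pow_add, pow_add, pow_one]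
    have : w0 ^ p ^ M = ((w0 ^ p ^ a) ^ p ^ m) ^ p := by rw [hexp, pow_mul, pow_mul]
    rw [this, hw0, hm, one_pow]
  have hcop : Nat.Coprime u (p ^ M) :=
    Nat.Coprime.pow_right _ (((Nat.coprime_comm).mp (hp.coprime_iff_not_dvd.mpr hund)))
  have hpM1 : 1 < p ^ M := by
    have := hp.one_lt
    calc 1 < p := this
      _ = p ^ 1 := (pow_one p).symm
      _ ≤ p ^ M := Nat.pow_le_pow_right hp.pos (by omega)
  obtain ⟨v, -, hv⟩ := Nat.exists_mul_mod_eq_one_of_coprime hcop hpM1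
  -- u * v % p ^ M = 1, so u * v = p ^ M * k + 1
  have hdiv : u * v = p ^ M * (u * v / p ^ M) + 1 := by
    conv_lhs => rw [← Nat.div_add_mod (u * v) (p ^ M)]
    rw [hv]
  refine ⟨⟨w0 ^ v, ⟨M, ?_⟩⟩, Subtype.ext ?_⟩
  · show (w0 ^ v) ^ p ^ M = 1
    rw [← pow_mul, mul_comm, pow_mul, hw0t, one_pow]
  · show (w0 ^ v) ^ n = (z : Circle)
    have h2 : v * n = p ^ a * (u * v) := by rw [← hn']; ring
    rw [← pow_mul, h2, hdiv, mul_add, mul_one, pow_add, hw0]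
    have h3 : p ^ a * (p ^ M * (u * v / p ^ M)) = p ^ M * (p ^ a * (u * v / p ^ M)) := by ring
    rw [h3, pow_mul, hw0t, one_pow, one_mul]

lemma pi_prufer_torsion {p r : ℕ} (f : Fin r → PruferGroup p) : ∃ m : ℕ, f ^ p ^ m = 1 := by
  have h := fun i => prufer_torsion (f i)
  choose g hg using h
  refine ⟨Finset.univ.sup g, ?_⟩
  funext i
  show (f i) ^ p ^ Finset.univ.sup g = 1
  obtain ⟨c, hc⟩ := pow_dvd_pow p (Finset.le_sup (f := g) (Finset.mem_univ i))
  rw [hc, pow_mul, hg, one_pow]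

lemma torus_torsion {p r : ℕ} {T : Type*} [Group T] (h : IsDiscretePTorusOfRank p r T)
    (x : T) : ∃ m : ℕ, x ^ p ^ m = 1 := by
  obtain ⟨e⟩ := h
  obtain ⟨m, hm⟩ := pi_prufer_torsion (e x)
  exact ⟨m, by
    have : e (x ^ p ^ m) = 1 := by rw [map_pow, hm]
    simpa using e.injective (by simpa using this)⟩

lemma torus_root {p r : ℕ} [Fact p.Prime] {T : Type*} [Group T]
    (h : IsDiscretePTorusOfRank p r T) (x : T) {n : ℕ} (hn : n ≠ 0) : ∃ z : T, z ^ n = x := by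
  obtain ⟨e⟩ := h
  have h' := fun i => prufer_root p (e x i) hn
  choose w hw using h'
  refine ⟨e.symm w, e.injective ?_⟩
  rw [map_pow, e.apply_symm_apply]
  funext i
  exact hw i

/-! ### Transport of discrete p-torality along isomorphisms -/

lemma isDiscretePToral_congr {p : ℕ} {H K : Type*} [Group H] [Group K] (e : H ≃* K)
    (h : IsDiscretePToral p H) : IsDiscretePToral p K := by
  obtain ⟨r, T, hT, ⟨eT⟩, hfin, hpg⟩ := h
  have hT' : (T.map e.toMonoidHom).Normal := Subgroup.Normal.map hT e.toMonoidHom e.surjective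
  refine ⟨r, T.map e.toMonoidHom, hT', ⟨?_⟩, ?_, ?_⟩
  · exact ((Subgroup.equivMapOfInjective T e.toMonoidHom e.injective).symm.trans eT)
  · have q := QuotientGroup.congr T (T.map e.toMonoidHom) e rfl
    exact Finite.of_equiv _ q.toEquiv
  · have q := QuotientGroup.congr T (T.map e.toMonoidHom) e rfl
    intro x
    obtain ⟨k, hk⟩ := hpg (q.symm x)
    exact ⟨k, by rw [← q.apply_symm_apply x, ← map_pow, hk, map_one]⟩

lemma dpt_torsion {p : ℕ} {G : Type*} [Group G] {P : Subgroup G}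
    (h : IsDiscretePToral p ↥P) : ∀ x ∈ P, ∃ m : ℕ, x ^ p ^ m = 1 := by
  obtain ⟨r, T, hT, htor, hfin, hpg⟩ := h
  intro x hx
  obtain ⟨j, hj⟩ := hpg (QuotientGroup.mk (⟨x, hx⟩ : ↥P))
  rw [← QuotientGroup.mk_pow, QuotientGroup.eq_one_iff] at hj
  obtain ⟨l, hl⟩ := torus_torsion htor (⟨_, hj⟩ : ↥T)
  refine ⟨j + l, ?_⟩
  have : ((⟨x, hx⟩ : ↥P) ^ p ^ j) ^ p ^ l = 1 := by
    have := congrArg (Subtype.val) hl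
    exact Subtype.ext (by simpa using this)
  rw [← pow_mul, ← pow_add] at this
  simpa using congrArg Subtype.val this


/-! ### Conjugation transport -/

section Conj
variable {G : Type*} [Group G]

lemma mem_conj_map {g x : G} {P : Subgroup G} :
    x ∈ P.map (MulAut.conj g).toMonoidHom ↔ g⁻¹ * x * g ∈ P := by
  constructor
  · rintro ⟨y, hy, rfl⟩
    simpa [MulAut.conj_apply, mul_assoc] using hy
  · intro h
    exact ⟨g⁻¹ * x * g, h, by simp [MulAut.conj_apply]; group⟩

lemma conj_map_map_inv (g : G) (P : Subgroup G) :
    (P.map (MulAut.conj g).toMonoidHom).map (MulAut.conj g⁻¹).toMonoidHom = P := by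
  ext x
  rw [mem_conj_map, mem_conj_map]
  constructor
  · intro h; simpa [mul_assoc] using h
  · intro h; simpa [mul_assoc] using h

lemma conj_map_inv_map (g : G) (P : Subgroup G) :
    (P.map (MulAut.conj g⁻¹).toMonoidHom).map (MulAut.conj g).toMonoidHom = P := by
  have := conj_map_map_inv g⁻¹ P
  rwa [inv_inv] at this

lemma conj_dpt {p : ℕ} (g : G) {P : Subgroup G} (h : IsDiscretePToral p ↥P) :
    IsDiscretePToral p ↥(P.map (MulAut.conj g).toMonoidHom) :=
  isDiscretePToral_congr
    (Subgroup.equivMapOfInjective P (MulAut.conj g).toMonoidHom (MulAut.conj g).injective) h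

lemma max_conj {p : ℕ} {P B : Subgroup G} {g : G} (hg : g ∈ Subgroup.normalizer (B : Set G))
    (h : IsMaxDiscretePToralIn p P B) :
    IsMaxDiscretePToralIn p (P.map (MulAut.conj g).toMonoidHom) B := by
  obtain ⟨hPB, hdpt, hmax⟩ := h
  rw [Subgroup.mem_normalizer_iff] at hg
  refine ⟨?_, conj_dpt g hdpt, ?_⟩
  · intro x hx
    rw [mem_conj_map] at hx
    have := (hg (g⁻¹ * x * g)).mp (hPB hx)
    simpa [mul_assoc] using this
  · intro Q hQB hQdpt hle
    have h1 : P ≤ Q.map (MulAut.conj g⁻¹).toMonoidHom := by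
      have := Subgroup.map_mono (f := (MulAut.conj g⁻¹).toMonoidHom) hle
      rwa [conj_map_map_inv] at this
    have h2 : Q.map (MulAut.conj g⁻¹).toMonoidHom ≤ B := by
      intro x hx
      rw [mem_conj_map, inv_inv] at hx
      exact (hg x).mpr (hQB hx)
    have h3 := hmax _ h2 (conj_dpt g⁻¹ hQdpt) h1
    have := congrArg (Subgroup.map (MulAut.conj g).toMonoidHom) h3
    rwa [conj_map_inv_map] at this

lemma cent_le_norm (P : Subgroup G) : Subgroup.centralizer (P : Set G) ≤ Subgroup.normalizer (P : Set G) := by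
  intro c hc
  rw [Subgroup.mem_centralizer_iff] at hc
  rw [Subgroup.mem_normalizer_iff]
  intro h
  constructor
  · intro hh
    have h1 : c * h * c⁻¹ = h := by rw [← hc h hh]; group
    rw [h1]; exact hh
  · intro hh
    have h2 := hc _ hh
    have h3 : h = c * h * c⁻¹ := by
      have h4 : c * (h * c⁻¹ * c) = c * (c * h * c⁻¹) := by
        rw [← h2]; group
      have h5 := mul_left_cancel h4
      simpa using h5
    rw [h3]; exact hh

lemma conj_mem_centralizer {P : Subgroup G} {c q : G}
    (hc : c ∈ Subgroup.centralizer (P : Set G)) (hq : q ∈ P) :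
    q * c * q⁻¹ ∈ Subgroup.centralizer (P : Set G) := by
  rw [Subgroup.mem_centralizer_iff] at hc ⊢
  intro h hh
  have h1 := hc (q⁻¹ * h * q) (mul_mem (mul_mem (inv_mem hq) hh) hq)
  calc h * (q * c * q⁻¹) = q * ((q⁻¹ * h * q) * c) * q⁻¹ := by group
    _ = q * (c * (q⁻¹ * h * q)) * q⁻¹ := by rw [h1]
    _ = (q * c * q⁻¹) * h := by group

section Topo
variable [TopologicalSpace G] [IsTopologicalGroup G]

lemma conj_coe_eq (g : G) (Q : Subgroup G) :
    ((Q.map (MulAut.conj g).toMonoidHom : Subgroup G) : Set G)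
      = ((Homeomorph.mulLeft g).trans (Homeomorph.mulRight g⁻¹)) '' (Q : Set G) := by
  ext y
  simp only [Set.mem_image, SetLike.mem_coe, mem_conj_map, Homeomorph.trans_apply]
  constructor
  · intro hy
    refine ⟨g⁻¹ * y * g, hy, ?_⟩
    show g * (g⁻¹ * y * g) * g⁻¹ = y
    group
  · rintro ⟨z, hz, rfl⟩
    show g⁻¹ * (g * z * g⁻¹) * g ∈ Q
    simpa [mul_assoc] using hz

lemma conj_topClosure (g : G) (P : Subgroup G) :
    (P.map (MulAut.conj g).toMonoidHom).topologicalClosure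
      = P.topologicalClosure.map (MulAut.conj g).toMonoidHom := by
  apply SetLike.ext'
  rw [Subgroup.topologicalClosure_coe, conj_coe_eq, conj_coe_eq,
    Subgroup.topologicalClosure_coe, Homeomorph.image_closure]

lemma normalizer_le_of_dense {P Pb : Subgroup G} (hcl : P.topologicalClosure = Pb) :
    Subgroup.normalizer (P : Set G) ≤ Subgroup.normalizer (Pb : Set G) := by
  intro n hn
  have hmap : P.map (MulAut.conj n).toMonoidHom = P := by
    ext x
    rw [mem_conj_map]
    rw [Subgroup.mem_normalizer_iff] at hn
    constructor
    · intro h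
      have := (hn _).mp h
      simpa [mul_assoc] using this
    · intro h
      apply (hn (n⁻¹ * x * n)).mpr
      simpa [mul_assoc] using h
  have hbmap : Pb.map (MulAut.conj n).toMonoidHom = Pb := by
    rw [← hcl, ← conj_topClosure, hmap]
  rw [Subgroup.mem_normalizer_iff]
  intro h
  constructor
  · intro hh
    rw [← hbmap, mem_conj_map]
    simpa [mul_assoc] using hh
  · intro hh
    rw [← hbmap, mem_conj_map] at hh
    simpa [mul_assoc] using hh

lemma centralizer_topClosure [T2Space G] (P : Subgroup G) :
    Subgroup.centralizer (P : Set G) = Subgroup.centralizer ((P.topologicalClosure : Subgroup G) : Set G) := by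
  apply le_antisymm
  · intro c hc
    rw [Subgroup.mem_centralizer_iff] at hc ⊢
    intro h hh
    have hclsub : (P.topologicalClosure : Set G) ⊆ {y : G | y * c = c * y} := by
      rw [Subgroup.topologicalClosure_coe]
      apply closure_minimal
      · intro y hy; exact hc y hy
      · exact isClosed_eq (continuous_id.mul continuous_const) (continuous_const.mul continuous_id)
    exact hclsub hh
  · exact Subgroup.centralizer_le (fun x hx => Subgroup.le_topologicalClosure P hx)

end Topo
end Conj


/-! ### The key cocycle/norm argument lemmas -/

section Key
variable {G : Type*} [Group G] {p : ℕ} [Fact p.Prime]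

lemma conj_pow_eq (g y : G) (n : ℕ) : (g * y * g⁻¹) ^ n = g * y ^ n * g⁻¹ := by
  induction n with
  | zero => simp
  | succ n ih => rw [pow_succ, pow_succ, ih]; group

set_option maxHeartbeats 2000000 in
lemma key3 (P T0 A : Subgroup G)
    (hcomm : ∀ x ∈ T0, ∀ y ∈ T0, x * y = y * x)
    (hdiv : ∀ x ∈ T0, ∀ n : ℕ, n ≠ 0 → ∃ s ∈ T0, s ^ n = x)
    (hAmem : ∀ x : G, x ∈ A ↔ x ∈ T0 ∧ ∃ m : ℕ, x ^ p ^ m = 1)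
    (hPT0 : ∀ g ∈ P, ∀ x ∈ T0, g * x * g⁻¹ ∈ T0)
    (hPtor : ∀ x ∈ P, ∃ m : ℕ, x ^ p ^ m = 1)
    (hfinQ : Finite (↥P ⧸ A.subgroupOf P))
    (t : G) (htT0 : t ∈ T0) (htP : ∀ y, y ∈ P ↔ t * y * t⁻¹ ∈ P) :
    ∃ a ∈ A, ∀ y ∈ P, t * y * t⁻¹ = a * y * a⁻¹ := by
  classical
  have hAT0 : A ≤ T0 := fun x hx => ((hAmem x).mp hx).1
  have hPcapA : ∀ x, x ∈ P → x ∈ T0 → x ∈ A := fun x hxP hxT =>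
    (hAmem x).mpr ⟨hxT, hPtor x hxP⟩
  haveI hA'norm : (A.subgroupOf P).Normal := by
    constructor
    intro n hn g
    rw [Subgroup.mem_subgroupOf] at hn ⊢
    obtain ⟨hnT0, m, hm⟩ := (hAmem _).mp hn
    refine (hAmem _).mpr ⟨?_, m, ?_⟩
    · simpa using hPT0 g g.2 n hnT0
    · have : ((g * n * g⁻¹ : ↥P) : G) = (g : G) * (n : G) * (g : G)⁻¹ := by push_cast; ring_nf
      rw [this, conj_pow_eq, hm, mul_one, mul_inv_cancel]
  set Qt := ↥P ⧸ A.subgroupOf P with hQt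
  haveI : Finite Qt := hfinQ
  haveI : Fintype Qt := Fintype.ofFinite Qt
  set N := Nat.card Qt with hN
  have hpgP : IsPGroup p ↥P := by
    intro x
    obtain ⟨m, hm⟩ := hPtor x x.2
    exact ⟨m, Subtype.ext (by simpa using hm)⟩
  have hpgQ : IsPGroup p Qt := hpgP.to_quotient _
  obtain ⟨k, hk⟩ := IsPGroup.iff_card.mp hpgQ
  have hN0 : N ≠ 0 := by rw [hN, hk]; exact pow_ne_zero _ (Fact.out : p.Prime).ne_zero
  obtain ⟨σ, hσT0, hσN⟩ := hdiv t htT0 N hN0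
  have hroot : ∀ x ∈ T0, x ^ N ∈ A → x ∈ A := by
    intro x hx hxN
    obtain ⟨-, j, hj⟩ := (hAmem _).mp hxN
    refine (hAmem _).mpr ⟨hx, k + j, ?_⟩
    calc x ^ p ^ (k + j) = (x ^ p ^ k) ^ p ^ j := by rw [← pow_mul, ← pow_add]
      _ = (x ^ N) ^ p ^ j := by rw [hN, hk]
      _ = 1 := hj
  have h1 : ∀ y ∈ P, t * y * t⁻¹ * y⁻¹ ∈ A := by
    intro y hy
    apply hPcapA
    · exact mul_mem ((htP y).mp hy) (inv_mem hy)
    · have e : t * y * t⁻¹ * y⁻¹ = t * (y * t⁻¹ * y⁻¹) := by group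
      rw [e]
      exact mul_mem htT0 (hPT0 y hy t⁻¹ (inv_mem htT0))
  have h2 : ∀ y ∈ P, σ * y * σ⁻¹ * y⁻¹ ∈ A := by
    intro y hy
    have hyσ : y * σ⁻¹ * y⁻¹ ∈ T0 := hPT0 y hy σ⁻¹ (inv_mem hσT0)
    have hw : σ * y * σ⁻¹ * y⁻¹ ∈ T0 := by
      have e : σ * y * σ⁻¹ * y⁻¹ = σ * (y * σ⁻¹ * y⁻¹) := by group
      rw [e]; exact mul_mem hσT0 hyσ
    apply hroot _ hw
    have hc : Commute σ (y * σ⁻¹ * y⁻¹) := hcomm σ hσT0 _ hyσ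
    have e1 : σ * y * σ⁻¹ * y⁻¹ = σ * (y * σ⁻¹ * y⁻¹) := by group
    rw [e1, hc.mul_pow, hσN, conj_pow_eq, inv_pow, hσN]
    have e3 : t * (y * t⁻¹ * y⁻¹) = t * y * t⁻¹ * y⁻¹ := by group
    rw [e3]
    exact h1 y hy
  letI : CommGroup ↥A :=
    { (inferInstance : Group ↥A) with
      mul_comm := fun a b => Subtype.ext (hcomm a (hAT0 a.2) b (hAT0 b.2)) }
  set ψ : ↥P → ↥A := fun y => ⟨σ * y * σ⁻¹ * (y : G)⁻¹, h2 y y.2⟩ with hψdef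
  have hconjA : ∀ (y : ↥P) (a : ↥A), (y : G) * a * (y : G)⁻¹ ∈ A := by
    intro y a
    obtain ⟨haT0, m, hm⟩ := (hAmem _).mp a.2
    refine (hAmem _).mpr ⟨hPT0 y y.2 a haT0, m, ?_⟩
    rw [conj_pow_eq, hm, mul_one, mul_inv_cancel]
  set cA : ↥P → (↥A →* ↥A) := fun y =>
    { toFun := fun a => ⟨(y : G) * a * (y : G)⁻¹, hconjA y a⟩
      map_one' := Subtype.ext (by simp)
      map_mul' := fun a b => Subtype.ext (by
        show (y : G) * ((a : G) * (b : G)) * (y : G)⁻¹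
          = ((y : G) * a * (y : G)⁻¹) * ((y : G) * b * (y : G)⁻¹)
        group) } with hcAdef
  have hco : ∀ x y : ↥P, ψ (x * y) = ψ x * cA x (ψ y) := by
    intro x y
    apply Subtype.ext
    show σ * ((x : G) * y) * σ⁻¹ * ((x : G) * y)⁻¹
      = (σ * x * σ⁻¹ * (x : G)⁻¹) * ((x : G) * (σ * y * σ⁻¹ * (y : G)⁻¹) * (x : G)⁻¹)
    group
  have hinvc : ∀ (x a : ↥P), (a : G) ∈ A → ψ (x * a) = ψ x := by
    intro x a haA
    apply Subtype.ext
    show σ * ((x : G) * a) * σ⁻¹ * ((x : G) * a)⁻¹ = σ * x * σ⁻¹ * (x : G)⁻¹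
    have hcom : (a : G) * σ⁻¹ = σ⁻¹ * a := hcomm a (hAT0 haA) σ⁻¹ (inv_mem hσT0)
    calc σ * ((x : G) * a) * σ⁻¹ * ((x : G) * a)⁻¹
        = σ * (x : G) * ((a : G) * σ⁻¹) * (a : G)⁻¹ * (x : G)⁻¹ := by group
      _ = σ * (x : G) * (σ⁻¹ * (a : G)) * (a : G)⁻¹ * (x : G)⁻¹ := by rw [hcom]
      _ = σ * x * σ⁻¹ * (x : G)⁻¹ := by group
  have hlift : ∀ x y : ↥P, (QuotientGroup.mk x : Qt) = QuotientGroup.mk y → ψ x = ψ y := by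
    intro x y hxy
    have hmem : x⁻¹ * y ∈ A.subgroupOf P := QuotientGroup.eq.mp hxy
    rw [Subgroup.mem_subgroupOf] at hmem
    have : ψ (x * (x⁻¹ * y)) = ψ x := hinvc x (x⁻¹ * y) (by simpa using hmem)
    rw [mul_inv_cancel_left] at this
    exact this.symm
  set Ψ : Qt → ↥A := fun q => ψ q.out with hΨdef
  have hΨmk : ∀ x : ↥P, Ψ (QuotientGroup.mk x) = ψ x := by
    intro x
    exact hlift _ x (QuotientGroup.out_eq' _)
  set aK : ↥A := ∏ q : Qt, Ψ q with haK
  have key : ∀ y : ↥P, aK = (ψ y) ^ N * cA y aK := by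
    intro y
    have term : ∀ q : Qt, Ψ ((QuotientGroup.mk y) * q) = ψ y * cA y (Ψ q) := by
      intro q
      induction q using QuotientGroup.induction_on with
      | H x => rw [← QuotientGroup.mk_mul, hΨmk, hΨmk, hco]
    calc aK = ∏ q : Qt, Ψ ((QuotientGroup.mk y) * q) :=
          (Equiv.prod_comp (Equiv.mulLeft (QuotientGroup.mk y : Qt)) Ψ).symm
      _ = ∏ q : Qt, (ψ y * cA y (Ψ q)) := by
          apply Finset.prod_congr rfl
          intro q _
          exact term q
      _ = (∏ _q : Qt, ψ y) * ∏ q : Qt, cA y (Ψ q) := Finset.prod_mul_distrib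
      _ = (ψ y) ^ N * cA y aK := by
          rw [Finset.prod_const, Finset.card_univ, ← Nat.card_eq_fintype_card, ← hN,
            ← map_prod (cA y) Ψ Finset.univ, ← haK]
  have hpow : ∀ y : G, y ∈ P → ∀ n : ℕ,
      σ ^ n * y * (σ ^ n)⁻¹ * y⁻¹ = (σ * y * σ⁻¹ * y⁻¹) ^ n := by
    intro y hy n
    induction n with
    | zero => simp
    | succ n ih =>
      have hXT0 : σ ^ n * y * (σ ^ n)⁻¹ * y⁻¹ ∈ T0 := by
        have e : σ ^ n * y * (σ ^ n)⁻¹ * y⁻¹ = σ ^ n * (y * (σ ^ n)⁻¹ * y⁻¹) := by group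
        rw [e]
        exact mul_mem (pow_mem hσT0 n) (hPT0 y hy _ (inv_mem (pow_mem hσT0 n)))
      have hcomσ : σ * (σ ^ n * y * (σ ^ n)⁻¹ * y⁻¹) = (σ ^ n * y * (σ ^ n)⁻¹ * y⁻¹) * σ :=
        hcomm σ hσT0 _ hXT0
      calc σ ^ (n + 1) * y * (σ ^ (n + 1))⁻¹ * y⁻¹
          = σ * (σ ^ n * y * (σ ^ n)⁻¹ * y⁻¹) * (y * σ⁻¹ * y⁻¹) := by
            rw [pow_succ σ n]; group
        _ = (σ ^ n * y * (σ ^ n)⁻¹ * y⁻¹) * (σ * (y * σ⁻¹ * y⁻¹)) := by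
            rw [hcomσ]; group
        _ = (σ * y * σ⁻¹ * y⁻¹) ^ n * (σ * y * σ⁻¹ * y⁻¹) := by
            rw [ih]; congr 1; group
        _ = (σ * y * σ⁻¹ * y⁻¹) ^ (n + 1) := (pow_succ _ _).symm
  refine ⟨(aK : G), aK.2, ?_⟩
  intro y hy
  have hkey := key ⟨y, hy⟩
  have h5 : (ψ ⟨y, hy⟩) ^ N = aK * (cA ⟨y, hy⟩ aK)⁻¹ :=
    eq_mul_inv_iff_mul_eq.mpr hkey.symm
  have hval : (σ * y * σ⁻¹ * y⁻¹) ^ N = (aK : G) * (y * (aK : G) * y⁻¹)⁻¹ := by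
    have := congrArg (Subtype.val) h5
    simpa [hψdef, hcAdef] using this
  have h6 : t * y * t⁻¹ * y⁻¹ = (aK : G) * (y * (aK : G) * y⁻¹)⁻¹ := by
    rw [← hσN, hpow y hy N, hval]
  apply mul_right_cancel (b := y⁻¹)
  rw [h6]
  group

end Key

section Key4
variable {G : Type*} [Group G] {p : ℕ} [Fact p.Prime]

private lemma rel_trans {M : Type*} [Group M] {S : Subgroup M} {a b c : M}
    (h1 : a⁻¹ * b ∈ S) (h2 : b⁻¹ * c ∈ S) : a⁻¹ * c ∈ S := by
  have := mul_mem h1 h2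
  simpa [mul_assoc] using this

private lemma rel_symm {M : Type*} [Group M] {S : Subgroup M} {a b : M}
    (h : a⁻¹ * b ∈ S) : b⁻¹ * a ∈ S := by
  have := inv_mem h
  simpa using this

private lemma rel_mul_right {M : Type*} [CommGroup M] {S : Subgroup M} {a b : M} (c : M)
    (h : a⁻¹ * b ∈ S) : (a * c)⁻¹ * (b * c) ∈ S := by
  have e : (a * c)⁻¹ * (b * c) = a⁻¹ * b := by
    calc (a * c)⁻¹ * (b * c) = c⁻¹ * (a⁻¹ * b) * c := by group
      _ = (a⁻¹ * b) * c⁻¹ * c := by rw [mul_comm c⁻¹ (a⁻¹ * b)]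
      _ = a⁻¹ * b := by group
  rw [e]; exact h

set_option maxHeartbeats 2000000 in
lemma key4 (P P' T0 A : Subgroup G)
    (hcomm : ∀ x ∈ T0, ∀ y ∈ T0, x * y = y * x)
    (hdiv : ∀ x ∈ T0, ∀ n : ℕ, n ≠ 0 → ∃ s ∈ T0, s ^ n = x)
    (hAmem : ∀ x : G, x ∈ A ↔ x ∈ T0 ∧ ∃ m : ℕ, x ^ p ^ m = 1)
    (hAP' : A ≤ P')
    (hPT0 : ∀ g ∈ P, ∀ x ∈ T0, g * x * g⁻¹ ∈ T0)
    (hPtor : ∀ x ∈ P, ∃ m : ℕ, x ^ p ^ m = 1)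
    (hP'tor : ∀ x ∈ P', ∃ m : ℕ, x ^ p ^ m = 1)
    (hfinQ : Finite (↥P ⧸ A.subgroupOf P))
    (hdec : ∀ x ∈ P, ∃ a ∈ P', ∃ s ∈ T0, x = a * s) :
    ∃ σ ∈ T0, ∀ y ∈ P, σ * y * σ⁻¹ ∈ P' := by
  classical
  have hAT0 : A ≤ T0 := fun x hx => ((hAmem x).mp hx).1
  have hPcapA' : ∀ x, x ∈ P' → x ∈ T0 → x ∈ A := fun x hxP hxT =>
    (hAmem x).mpr ⟨hxT, hP'tor x hxP⟩
  haveI hA'norm : (A.subgroupOf P).Normal := by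
    constructor
    intro n hn g
    rw [Subgroup.mem_subgroupOf] at hn ⊢
    obtain ⟨hnT0, m, hm⟩ := (hAmem _).mp hn
    refine (hAmem _).mpr ⟨?_, m, ?_⟩
    · simpa using hPT0 g g.2 n hnT0
    · have e : ((g * n * g⁻¹ : ↥P) : G) = (g : G) * (n : G) * (g : G)⁻¹ := by push_cast; ring_nf
      rw [e, conj_pow_eq, hm, mul_one, mul_inv_cancel]
  set Qt := ↥P ⧸ A.subgroupOf P with hQt
  haveI : Finite Qt := hfinQ
  haveI : Fintype Qt := Fintype.ofFinite Qt
  set N := Nat.card Qt with hN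
  have hpgP : IsPGroup p ↥P := by
    intro x
    obtain ⟨m, hm⟩ := hPtor x x.2
    exact ⟨m, Subtype.ext (by simpa using hm)⟩
  have hpgQ : IsPGroup p Qt := hpgP.to_quotient _
  obtain ⟨k, hk⟩ := IsPGroup.iff_card.mp hpgQ
  have hN0 : N ≠ 0 := by rw [hN, hk]; exact pow_ne_zero _ (Fact.out : p.Prime).ne_zero
  have hroot : ∀ x ∈ T0, x ^ N ∈ A → x ∈ A := by
    intro x hx hxN
    obtain ⟨-, j, hj⟩ := (hAmem _).mp hxN
    refine (hAmem _).mpr ⟨hx, k + j, ?_⟩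
    calc x ^ p ^ (k + j) = (x ^ p ^ k) ^ p ^ j := by rw [← pow_mul, ← pow_add]
      _ = (x ^ N) ^ p ^ j := by rw [hN, hk]
      _ = 1 := hj
  -- choice of decompositions
  have hchoice : ∀ y : ↥P, ∃ a ∈ P', ∃ s ∈ T0, (y : G) = a * s := fun y => hdec y y.2
  choose pf hpf tf htf heq using hchoice
  have hpfy : ∀ y : ↥P, pf y = (y : G) * (tf y)⁻¹ := by
    intro y; rw [heq y]; group
  -- the commutative group ↥T0
  letI : CommGroup ↥T0 :=
    { (inferInstance : Group ↥T0) with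
      mul_comm := fun a b => Subtype.ext (hcomm a a.2 b b.2) }
  set AK : Subgroup ↥T0 := A.subgroupOf T0 with hAKdef
  set tK : ↥P → ↥T0 := fun y => ⟨tf y, htf y⟩ with htKdef
  have hconjT : ∀ (y : ↥P) (u : ↥T0), (y : G)⁻¹ * u * (y : G) ∈ T0 := by
    intro y u
    simpa using hPT0 (y : G)⁻¹ (inv_mem y.2) u u.2
  set cT : ↥P → (↥T0 →* ↥T0) := fun y =>
    { toFun := fun u => ⟨(y : G)⁻¹ * u * (y : G), hconjT y u⟩
      map_one' := Subtype.ext (by simp)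
      map_mul' := fun a b => Subtype.ext (by
        show (y : G)⁻¹ * ((a : G) * (b : G)) * (y : G)
          = ((y : G)⁻¹ * a * (y : G)) * ((y : G)⁻¹ * b * (y : G))
        group) } with hcTdef
  have hcTA : ∀ (y : ↥P) (u : ↥T0), u ∈ AK → cT y u ∈ AK := by
    intro y u hu
    rw [Subgroup.mem_subgroupOf] at hu ⊢
    obtain ⟨huT0, m, hm⟩ := (hAmem _).mp hu
    refine (hAmem _).mpr ⟨hconjT y u, m, ?_⟩
    show ((y : G)⁻¹ * u * (y : G)) ^ p ^ m = 1
    have e : (y : G)⁻¹ * u * (y : G) = (y : G)⁻¹ * u * ((y : G)⁻¹)⁻¹ := by rw [inv_inv]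
    rw [e, conj_pow_eq, hm, mul_one, mul_inv_cancel]
  -- well-definedness modulo A
  have hwd : ∀ x y : ↥P, ((x : G))⁻¹ * y ∈ A → (tK x)⁻¹ * tK y ∈ AK := by
    intro x y ha
    have haT0 : (x : G)⁻¹ * (y : G) ∈ T0 := hAT0 ha
    set a : G := (x : G)⁻¹ * y with hadef
    have e1 : pf y * tf y = pf x * tf x * a := by
      rw [← heq y, ← heq x, hadef]
      group
    have hd : (pf x)⁻¹ * pf y = tf x * a * (tf y)⁻¹ := by
      have e2 : pf y = pf x * tf x * a * (tf y)⁻¹ := by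
        rw [← e1]; group
      rw [e2]; group
    have hdP' : (pf x)⁻¹ * pf y ∈ P' := mul_mem (inv_mem (hpf x)) (hpf y)
    have hdT0 : tf x * a * (tf y)⁻¹ ∈ T0 :=
      mul_mem (mul_mem (htf x) haT0) (inv_mem (htf y))
    have hdA : tf x * a * (tf y)⁻¹ ∈ A := hPcapA' _ (hd ▸ hdP') hdT0
    rw [Subgroup.mem_subgroupOf]
    show (tf x)⁻¹ * tf y ∈ A
    have c1 : (tf x)⁻¹ * a = a * (tf x)⁻¹ := hcomm _ (inv_mem (htf x)) a haT0
    have c2 : tf y * (tf x)⁻¹ = (tf x)⁻¹ * tf y := hcomm _ (htf y) _ (inv_mem (htf x))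
    have e3 : (tf x * a * (tf y)⁻¹)⁻¹ * a = (tf x)⁻¹ * tf y := by
      calc (tf x * a * (tf y)⁻¹)⁻¹ * a = (tf y * a⁻¹) * ((tf x)⁻¹ * a) := by group
        _ = (tf y * a⁻¹) * (a * (tf x)⁻¹) := by rw [c1]
        _ = tf y * (tf x)⁻¹ := by group
        _ = (tf x)⁻¹ * tf y := c2
    rw [← e3]
    exact mul_mem (inv_mem hdA) ha
  -- cocycle relation modulo A
  have hco : ∀ x y : ↥P, (cT y (tK x) * tK y)⁻¹ * tK (x * y) ∈ AK := by
    intro x y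
    have hyt : (y : G)⁻¹ * tf x * (y : G) ∈ T0 := by
      simpa using hPT0 (y : G)⁻¹ (inv_mem y.2) _ (htf x)
    have hsw : tf y * ((y : G)⁻¹ * tf x * y) = ((y : G)⁻¹ * tf x * y) * tf y :=
      hcomm _ (htf y) _ hyt
    have hpfxy : pf (x * y) = (x : G) * (y : G) * (tf (x * y))⁻¹ := by
      have hxyval : ((x * y : ↥P) : G) = (x : G) * (y : G) := by push_cast; rfl
      rw [hpfy (x * y), hxyval]
    have hEeq : (pf x * pf y)⁻¹ * pf (x * y)
        = ((y : G)⁻¹ * tf x * y * tf y) * (tf (x * y))⁻¹ := by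
      rw [hpfy x, hpfy y, hpfxy]
      calc ((x : G) * (tf x)⁻¹ * ((y : G) * (tf y)⁻¹))⁻¹ * ((x : G) * (y : G) * (tf (x * y))⁻¹)
          = tf y * ((y : G)⁻¹ * tf x * y) * (tf (x * y))⁻¹ := by group
        _ = ((y : G)⁻¹ * tf x * y) * tf y * (tf (x * y))⁻¹ := by rw [hsw]
        _ = (y : G)⁻¹ * tf x * y * tf y * (tf (x * y))⁻¹ := by group
    have hEA : (pf x * pf y)⁻¹ * pf (x * y) ∈ A := by
      apply hPcapA'
      · exact mul_mem (inv_mem (mul_mem (hpf x) (hpf y))) (hpf (x * y))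
      · rw [hEeq]
        exact mul_mem (mul_mem hyt (htf y)) (inv_mem (htf (x * y)))
    rw [Subgroup.mem_subgroupOf]
    show (((y : G)⁻¹ * tf x * (y : G)) * tf y)⁻¹ * tf (x * y) ∈ A
    have hFT0 : (y : G)⁻¹ * tf x * y * tf y ∈ T0 := mul_mem hyt (htf y)
    have hswap : ((y : G)⁻¹ * tf x * y * tf y)⁻¹ * tf (x * y)
        = tf (x * y) * ((y : G)⁻¹ * tf x * y * tf y)⁻¹ :=
      hcomm _ (inv_mem hFT0) _ (htf (x * y))
    have e4 : tf (x * y) * ((y : G)⁻¹ * tf x * y * tf y)⁻¹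
        = (((y : G)⁻¹ * tf x * y * tf y) * (tf (x * y))⁻¹)⁻¹ := by group
    have e5 : (((y : G)⁻¹ * tf x * (y : G)) * tf y)⁻¹ * tf (x * y)
        = ((y : G)⁻¹ * tf x * y * tf y)⁻¹ * tf (x * y) := by group
    rw [e5, hswap, e4, ← hEeq]
    exact inv_mem hEA
  -- representatives
  set TK : Qt → ↥T0 := fun q => tK q.out with hTKdef
  have hTKmk : ∀ x : ↥P, (TK (QuotientGroup.mk x))⁻¹ * tK x ∈ AK := by
    intro x
    apply hwd
    have h0 : (QuotientGroup.mk ((QuotientGroup.mk x : Qt).out) : Qt) = QuotientGroup.mk x :=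
      QuotientGroup.out_eq' _
    have h := QuotientGroup.eq.mp h0
    rw [Subgroup.mem_subgroupOf] at h
    simpa using h
  -- product congruence
  have hprodcong : ∀ f g : Qt → ↥T0, (∀ q, (f q)⁻¹ * g q ∈ AK) →
      (∏ q : Qt, f q)⁻¹ * (∏ q : Qt, g q) ∈ AK := by
    intro f g h
    have e : (∏ q : Qt, f q)⁻¹ * (∏ q : Qt, g q) = ∏ q : Qt, ((f q)⁻¹ * g q) := by
      rw [Finset.prod_mul_distrib, ← Finset.prod_inv_distrib]
    rw [e]
    exact Subgroup.prod_mem AK (fun q _ => h q)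
  set τ : ↥T0 := ∏ q : Qt, TK q with hτdef
  have key : ∀ y : ↥P, τ⁻¹ * (cT y τ * (tK y) ^ N) ∈ AK := by
    intro y
    have reindex : τ = ∏ q : Qt, TK (q * QuotientGroup.mk y) := by
      rw [hτdef]
      exact (Equiv.prod_comp (Equiv.mulRight (QuotientGroup.mk y : Qt)) TK).symm
    have term : ∀ q : Qt, (TK (q * QuotientGroup.mk y))⁻¹ * (cT y (TK q) * tK y) ∈ AK := by
      intro q
      induction q using QuotientGroup.induction_on with
      | H x =>
        have hmm : (QuotientGroup.mk x * QuotientGroup.mk y : Qt) = QuotientGroup.mk (x * y) :=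
          rfl
        rw [hmm]
        have u1 := hTKmk (x * y)
        have u2 := hco x y
        have u3 : (cT y (TK (QuotientGroup.mk x)))⁻¹ * (cT y (tK x)) ∈ AK := by
          have h5 := hcTA y _ (hTKmk x)
          simpa [map_mul, map_inv] using h5
        exact rel_trans u1 (rel_trans (rel_symm u2) (rel_mul_right (tK y) (rel_symm u3)))
    have h7 : (∏ q : Qt, TK (q * QuotientGroup.mk y))⁻¹
        * (∏ q : Qt, (cT y (TK q) * tK y)) ∈ AK := hprodcong _ _ term
    rw [← reindex] at h7
    have h8 : (∏ q : Qt, (cT y (TK q) * tK y)) = cT y τ * (tK y) ^ N := by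
      rw [Finset.prod_mul_distrib, Finset.prod_const, Finset.card_univ,
        ← Nat.card_eq_fintype_card, ← hN, ← map_prod, hτdef]
    rwa [h8] at h7
  -- take N-th root of τ
  obtain ⟨σv, hσvT0, hσvN⟩ := hdiv (τ : G) τ.2 N hN0
  have hσKN : (⟨σv, hσvT0⟩ : ↥T0) ^ N = τ := Subtype.ext (by simpa using hσvN)
  set σK : ↥T0 := ⟨σv, hσvT0⟩ with hσKdef
  refine ⟨σv, hσvT0, ?_⟩
  intro y hy
  set yP : ↥P := ⟨y, hy⟩ with hyPdef
  set D : ↥T0 := tK yP * ((cT yP σK)⁻¹ * σK)⁻¹ with hDdef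
  have hDN : D ^ N ∈ AK := by
    have e1 : D ^ N = (tK yP) ^ N * (((cT yP τ)⁻¹ * τ)⁻¹) := by
      rw [hDdef, mul_pow, inv_pow, mul_pow, inv_pow, ← map_pow, hσKN]
    have e2 : ((cT yP τ)⁻¹ * τ)⁻¹ = τ⁻¹ * cT yP τ := by group
    have e3 : (tK yP) ^ N * (τ⁻¹ * cT yP τ) = τ⁻¹ * (cT yP τ * (tK yP) ^ N) := by
      rw [mul_comm ((tK yP) ^ N) (τ⁻¹ * cT yP τ), mul_assoc]
    rw [e1, e2, e3]
    exact key yP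
  have hDA : ((D : ↥T0) : G) ∈ A := by
    apply hroot _ D.2
    have e : ((D : ↥T0) : G) ^ N = ((D ^ N : ↥T0) : G) := by push_cast; rfl
    rw [e]
    have := hDN
    rwa [Subgroup.mem_subgroupOf] at this
  -- unfold the value of D
  have hDval : ((D : ↥T0) : G) = tf yP * (σv⁻¹ * ((y : G)⁻¹ * σv * y)) := by
    rw [hDdef]
    push_cast
    show tf yP * ((((y : G)⁻¹ * σv * (y : G))⁻¹ * σv)⁻¹) = tf yP * (σv⁻¹ * ((y : G)⁻¹ * σv * y))
    group
  have hyσ : (y : G)⁻¹ * σv * y ∈ T0 := by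
    simpa using hPT0 (y : G)⁻¹ (inv_mem hy) _ hσvT0
  have hswp : ((y : G)⁻¹ * σv * y) * σv⁻¹ = σv⁻¹ * ((y : G)⁻¹ * σv * y) :=
    hcomm _ hyσ _ (inv_mem hσvT0)
  have hfin : (pf yP)⁻¹ * (σv * y * σv⁻¹) = ((D : ↥T0) : G) := by
    rw [hpfy yP, hDval]
    calc ((yP : G) * (tf yP)⁻¹)⁻¹ * (σv * y * σv⁻¹)
        = tf yP * (((y : G)⁻¹ * σv * y) * σv⁻¹) := by
          rw [hyPdef]
          group
      _ = tf yP * (σv⁻¹ * ((y : G)⁻¹ * σv * y)) := by rw [hswp]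
  have hfinal : σv * y * σv⁻¹ = pf yP * ((D : ↥T0) : G) := by
    rw [← hfin]
    group
  rw [hfinal]
  exact mul_mem (hpf yP) (hAP' hDA)

end Key4

section L1
variable {G : Type*} [Group G] {p : ℕ} [Fact p.Prime]

set_option maxHeartbeats 2000000 in
lemma torsion_mem_of_max
    (P B T0 : Subgroup G)
    (hmax : IsMaxDiscretePToralIn p P B)
    (hT0B : T0 ≤ B)
    (hcomm : ∀ x ∈ T0, ∀ y ∈ T0, x * y = y * x)
    (hinvB : ∀ g ∈ B, ∀ x ∈ T0, g * x * g⁻¹ ∈ T0)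
    (hfinT : ∀ m : ℕ, {z : G | z ∈ T0 ∧ z ^ p ^ m = 1}.Finite)
    (N : ℕ) (hN0 : N ≠ 0) (hNT0 : ∀ x ∈ B, x ^ N ∈ T0) :
    ∀ x ∈ T0, ∀ m : ℕ, x ^ p ^ m = 1 → x ∈ P := by
  classical
  obtain ⟨hPB, hdpt, hmaxQ⟩ := hmax
  obtain ⟨r, T, hTnorm, hTorus, hfinPT, hpgPT⟩ := hdpt
  set Ti : Subgroup G := T.map P.subtype with hTi
  have hTiP : Ti ≤ P := Subgroup.map_subtype_le T
  have hTiT0 : Ti ≤ T0 := by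
    rintro x hx
    obtain ⟨y, hy, rfl⟩ := hx
    obtain ⟨z, hz⟩ := torus_root hTorus (⟨y, hy⟩ : ↥T) hN0
    have hzv : (((z : ↥P) : G)) ^ N = (y : G) := by
      have := congrArg (fun w : ↥T => ((w : ↥P) : G)) hz
      simpa using this
    show (y : G) ∈ T0
    rw [← hzv]
    exact hNT0 _ (hPB (z : ↥P).2)
  intro x hxT0 m hxm
  set Tm : Subgroup G :=
    { carrier := {z : G | z ∈ T0 ∧ z ^ p ^ m = 1}
      one_mem' := ⟨one_mem T0, one_pow _⟩
      mul_mem' := by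
        rintro a b ⟨haT, ha⟩ ⟨hbT, hb⟩
        refine ⟨mul_mem haT hbT, ?_⟩
        have hc : Commute a b := hcomm a haT b hbT
        rw [hc.mul_pow, ha, hb, one_mul]
      inv_mem' := by
        rintro a ⟨haT, ha⟩
        exact ⟨inv_mem haT, by rw [inv_pow, ha, inv_one]⟩ } with hTm
  have hTmmem : ∀ z : G, z ∈ Tm ↔ z ∈ T0 ∧ z ^ p ^ m = 1 := fun z => Iff.rfl
  have hTmT0 : Tm ≤ T0 := fun z hz => ((hTmmem z).mp hz).1
  haveI hsetfin : Finite ↥{z : G | z ∈ T0 ∧ z ^ p ^ m = 1} := (hfinT m).to_subtype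
  haveI hTmfin : Finite ↥Tm :=
    Finite.of_injective
      (fun z : ↥Tm => (⟨z.1, (hTmmem z.1).mp z.2⟩ : ↥{z : G | z ∈ T0 ∧ z ^ p ^ m = 1}))
      (fun a b h => Subtype.ext (congrArg Subtype.val h))
  have hPnormTm : ∀ g ∈ P, ∀ z ∈ Tm, g * z * g⁻¹ ∈ Tm := by
    intro g hg z hz
    obtain ⟨hzT0, hzm⟩ := (hTmmem z).mp hz
    refine (hTmmem _).mpr ⟨hinvB g (hPB hg) z hzT0, ?_⟩
    rw [conj_pow_eq, hzm, mul_one, mul_inv_cancel]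
  set Q : Subgroup G :=
    { carrier := (P : Set G) * (Tm : Set G)
      one_mem' := ⟨1, one_mem P, 1, one_mem Tm, one_mul 1⟩
      mul_mem' := by
        rintro w1 w2 ⟨a, ha, b, hb, rfl⟩ ⟨c, hc, d, hd, rfl⟩
        have hbc : c⁻¹ * b * c ∈ Tm := by
          have := hPnormTm c⁻¹ (inv_mem hc) b hb
          simpa using this
        exact ⟨a * c, mul_mem ha hc, (c⁻¹ * b * c) * d, mul_mem hbc hd, by group⟩
      inv_mem' := by
        rintro w ⟨a, ha, b, hb, rfl⟩
        exact ⟨a⁻¹, inv_mem ha, a * b⁻¹ * a⁻¹, hPnormTm a ha b⁻¹ (inv_mem hb), by group⟩ }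
    with hQdef
  have hQmem : ∀ w : G, w ∈ Q ↔ ∃ a ∈ P, ∃ b ∈ Tm, a * b = w := fun w => Set.mem_mul
  have hPQ : P ≤ Q := fun g hg => (hQmem g).mpr ⟨g, hg, 1, one_mem Tm, mul_one g⟩
  have hTmQ : Tm ≤ Q := fun z hz => (hQmem z).mpr ⟨1, one_mem P, z, hz, one_mul z⟩
  have hQB : Q ≤ B := by
    intro w hw
    obtain ⟨a, ha, b, hb, rfl⟩ := (hQmem w).mp hw
    exact mul_mem (hPB ha) (hT0B (hTmT0 hb))
  have hTiQ : Ti ≤ Q := fun z hz => hPQ (hTiP hz)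
  have hQdpt : IsDiscretePToral p ↥Q := by
    obtain ⟨eT⟩ := hTorus
    have hTiQnorm : (Ti.subgroupOf Q).Normal := by
      constructor
      intro n hn g
      rw [Subgroup.mem_subgroupOf] at hn ⊢
      obtain ⟨a, ha, b, hb, hab⟩ := (hQmem (g : G)).mp g.2
      have hnT0 : (n : G) ∈ T0 := hTiT0 hn
      have hbn : b * (n : G) * b⁻¹ = (n : G) := by
        have hcb := hcomm b (hTmT0 hb) n hnT0
        rw [hcb]; group
      have hval : ((g * n * g⁻¹ : ↥Q) : G) = a * (n : G) * a⁻¹ := by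
        push_cast
        rw [← hab]
        calc a * b * (n : G) * (a * b)⁻¹ = a * (b * (n : G) * b⁻¹) * a⁻¹ := by group
          _ = a * (n : G) * a⁻¹ := by rw [hbn]
      rw [hval]
      obtain ⟨u, hu, huv⟩ := hn
      have hconj : (⟨a, ha⟩ : ↥P) * u * (⟨a, ha⟩ : ↥P)⁻¹ ∈ T := hTnorm.conj_mem u hu ⟨a, ha⟩
      refine ⟨_, hconj, ?_⟩
      have huval : (u : G) = (n : G) := huv
      have hval3 : P.subtype (⟨a, ha⟩ * u * ⟨a, ha⟩⁻¹) = a * (u : G) * a⁻¹ := by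
        simp
      rw [hval3, huval]
    haveI := hTiQnorm
    refine ⟨r, Ti.subgroupOf Q, hTiQnorm, ⟨?_⟩, ?_, ?_⟩
    · exact (Subgroup.subgroupOfEquivOfLe hTiQ).trans
        ((Subgroup.equivMapOfInjective T P.subtype (Subgroup.subtype_injective P)).symm.trans eT)
    · -- Finite quotient
      set F : (↥P ⧸ T) × ↥Tm → (↥Q ⧸ Ti.subgroupOf Q) := fun c =>
        Quotient.liftOn' c.1
          (fun x => QuotientGroup.mk (⟨(x : G) * (c.2 : G),
            (hQmem _).mpr ⟨x, x.2, c.2, c.2.2, rfl⟩⟩ : ↥Q))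
          (by
            intro x y hxy
            have hxy' : x⁻¹ * y ∈ T := QuotientGroup.leftRel_apply.mp hxy
            apply (QuotientGroup.eq).mpr
            rw [Subgroup.mem_subgroupOf]
            have htmem : ((x⁻¹ * y : ↥P) : G) ∈ Ti := ⟨x⁻¹ * y, hxy', rfl⟩
            have hcb : Commute ((x⁻¹ * y : ↥P) : G) ((c.2 : G)) :=
              hcomm _ (hTiT0 htmem) _ (hTmT0 c.2.2)
            show (((x : G) * (c.2 : G))⁻¹ * ((y : G) * (c.2 : G))) ∈ Ti
            have e : ((x : G) * (c.2 : G))⁻¹ * ((y : G) * (c.2 : G))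
                = (c.2 : G)⁻¹ * (((x⁻¹ * y : ↥P) : G)) * (c.2 : G) := by
              push_cast; group
            have e2 : (c.2 : G)⁻¹ * (((x⁻¹ * y : ↥P) : G)) * (c.2 : G)
                = ((x⁻¹ * y : ↥P) : G) := by
              rw [mul_assoc, hcb.eq]; group
            rw [e, e2]
            exact htmem) with hF
      have hFsurj : Function.Surjective F := by
        intro q
        induction q using QuotientGroup.induction_on with
        | H w =>
          obtain ⟨a, ha, b, hb, hab⟩ := (hQmem (w : G)).mp w.2
          refine ⟨(QuotientGroup.mk (⟨a, ha⟩ : ↥P), ⟨b, hb⟩), ?_⟩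
          have e3 : F (QuotientGroup.mk (⟨a, ha⟩ : ↥P), ⟨b, hb⟩)
              = QuotientGroup.mk (⟨a * b,
                  (hQmem _).mpr ⟨a, ha, b, hb, rfl⟩⟩ : ↥Q) := rfl
          rw [e3]
          exact congrArg QuotientGroup.mk (Subtype.ext hab)
      exact Finite.of_surjective F hFsurj
    · -- p-group quotient
      intro q
      induction q using QuotientGroup.induction_on with
      | H w =>
        obtain ⟨a, ha, b, hb, hab⟩ := (hQmem (w : G)).mp w.2
        obtain ⟨j, hj⟩ := hpgPT (QuotientGroup.mk (⟨a, ha⟩ : ↥P))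
        rw [← QuotientGroup.mk_pow, QuotientGroup.eq_one_iff] at hj
        have haTi : a ^ p ^ j ∈ Ti := ⟨_, hj, by push_cast; rfl⟩
        have hwpow : ∀ n : ℕ, ∃ c ∈ Tm, (a * b) ^ n = a ^ n * c := by
          intro n
          induction n with
          | zero => exact ⟨1, one_mem Tm, by simp⟩
          | succ n ih =>
            obtain ⟨c, hc, hcEq⟩ := ih
            have hcc : a⁻¹ * c * a ∈ Tm := by
              have := hPnormTm a⁻¹ (inv_mem ha) c hc
              simpa using this
            refine ⟨(a⁻¹ * c * a) * b, mul_mem hcc hb, ?_⟩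
            rw [pow_succ, hcEq, pow_succ]
            group
        obtain ⟨c, hc, hcEq⟩ := hwpow (p ^ j)
        have hcomm2 : Commute (a ^ p ^ j) c := hcomm _ (hTiT0 haTi) _ (hTmT0 hc)
        have hcm : c ^ p ^ m = 1 := ((hTmmem c).mp hc).2
        have hfinal : (w : G) ^ p ^ (j + m) ∈ Ti := by
          have e1 : (w : G) ^ p ^ (j + m) = ((a * b) ^ p ^ j) ^ p ^ m := by
            rw [← hab, ← pow_mul, ← pow_add]
          rw [e1, hcEq, hcomm2.mul_pow, hcm, mul_one]
          exact pow_mem haTi _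
        refine ⟨j + m, ?_⟩
        rw [← QuotientGroup.mk_pow, QuotientGroup.eq_one_iff, Subgroup.mem_subgroupOf]
        simpa using hfinal
  have hQP : Q = P := hmaxQ Q hQB hQdpt hPQ
  have hxQ : x ∈ Q := hTmQ ((hTmmem x).mpr ⟨hxT0, hxm⟩)
  rw [hQP] at hxQ
  exact hxQ

end L1

end OutIsoAux






/-- Let `G` be a compact Lie group and `P` a `p`-discretization of a
`p`-toral subgroup `𝐏` of `G`.  Then the natural map `Out_G(P) → Out_G(𝐏)` induced by
the inclusion `N_G(P) ⊆ N_G(𝐏)` (where `C_G(P) = C_G(𝐏)`) is a group isomorphism;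
this is expressed at the level of cosets of the denominators `C_G(P)·P` and
`C_G(𝐏)·𝐏`. -/
theorem out_iso_of_pDiscretization (p : ℕ) [Fact p.Prime] {E M G : Type*} [NormedAddCommGroup E] [NormedSpace ℝ E] [FiniteDimensional ℝ E]
    [TopologicalSpace M] {I : ModelWithCorners ℝ E M}
    [Group G] [TopologicalSpace G] [ChartedSpace M G] [IsTopologicalGroup G] [LieGroup I (⊤ : ℕ∞) G]
    [CompactSpace G] [T2Space G]
    (Pbold P : Subgroup G) (hPbold : IsPToralSubgroup p Pbold)
    (hP : IsPDiscretizationOf p P Pbold) :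
    Subgroup.normalizer (P : Set G) ≤ Subgroup.normalizer (Pbold : Set G) ∧
    Subgroup.centralizer (P : Set G) = Subgroup.centralizer (Pbold : Set G) ∧
    (∀ n ∈ Subgroup.normalizer (P : Set G),
      n ∈ (Subgroup.centralizer (Pbold : Set G) : Set G) * (Pbold : Set G) →
        n ∈ (Subgroup.centralizer (P : Set G) : Set G) * (P : Set G)) ∧
    (∀ g ∈ Subgroup.normalizer (Pbold : Set G), ∃ n ∈ Subgroup.normalizer (P : Set G),
      n⁻¹ * g ∈ (Subgroup.centralizer (Pbold : Set G) : Set G) * (Pbold : Set G)) := by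
  classical
  obtain ⟨hPbclosed, hPbcompact, r0, hTorus0, hT0norm, hfinQ0, hpgQ0⟩ := hPbold
  obtain ⟨hPcl, hPmaxfull⟩ := hP
  obtain ⟨hPle, hPdpt, hPmaxQ⟩ := hPmaxfull
  have hPmax : IsMaxDiscretePToralIn p P Pbold := ⟨hPle, hPdpt, hPmaxQ⟩
  haveI := hT0norm
  set T0sub := Subgroup.connectedComponentOfOne ↥Pbold with hT0subdef
  set T0 : Subgroup G := T0sub.map Pbold.subtype with hT0def
  obtain ⟨e0, he0c, he0c'⟩ := hTorus0
  have hT0le : T0 ≤ Pbold := Subgroup.map_subtype_le _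
  have hcommsub : ∀ u v : ↥T0sub, u * v = v * u := fun u v =>
    e0.injective (by rw [map_mul, map_mul, mul_comm])
  have hcomm : ∀ x ∈ T0, ∀ y ∈ T0, x * y = y * x := by
    rintro x ⟨xh, hxh, rfl⟩ y ⟨yh, hyh, rfl⟩
    have h1 := hcommsub ⟨xh, hxh⟩ ⟨yh, hyh⟩
    have h2 := congrArg (fun w : ↥T0sub => ((w : ↥Pbold) : G)) h1
    simpa using h2
  have hdivT0 : ∀ x ∈ T0, ∀ n : ℕ, n ≠ 0 → ∃ s ∈ T0, s ^ n = x := by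
    rintro x ⟨xh, hxh, rfl⟩ n hn
    set u : ↥T0sub := ⟨xh, hxh⟩ with hu
    choose w hw using fun i => OutIsoAux.circle_root (e0 u i) hn
    refine ⟨(((e0.symm w : ↥T0sub) : ↥Pbold) : G), ⟨e0.symm w, (e0.symm w).2, rfl⟩, ?_⟩
    have h1 : (e0.symm w) ^ n = u := by
      apply e0.injective
      rw [map_pow, e0.apply_symm_apply]
      funext i
      exact hw i
    have h2 := congrArg (fun z : ↥T0sub => ((z : ↥Pbold) : G)) h1
    simpa using h2
  have hinvPb : ∀ g ∈ Pbold, ∀ x ∈ T0, g * x * g⁻¹ ∈ T0 := by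
    rintro g hg x ⟨xh, hxh, rfl⟩
    have h1 := hT0norm.conj_mem xh hxh ⟨g, hg⟩
    exact ⟨_, h1, by simp⟩
  have hfinT : ∀ m : ℕ, {z : G | z ∈ T0 ∧ z ^ p ^ m = 1}.Finite := by
    intro m
    have hpm : p ^ m ≠ 0 := pow_ne_zero _ (Fact.out : p.Prime).ne_zero
    have hfin1 : {f : Fin r0 → Circle | f ^ p ^ m = 1}.Finite := by
      have hsub : {f : Fin r0 → Circle | f ^ p ^ m = 1}
          ⊆ Set.pi Set.univ (fun _ => {z : Circle | z ^ p ^ m = 1}) := by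
        intro f hf i _
        have h1 := congrArg (fun g : Fin r0 → Circle => g i) hf
        simpa using h1
      exact Set.Finite.subset
        (Set.Finite.pi (fun _ => OutIsoAux.circle_torsion_finite hpm)) hsub
    apply Set.Finite.subset (Set.Finite.image
      (fun f : Fin r0 → Circle => (((e0.symm f : ↥T0sub) : ↥Pbold) : G)) hfin1)
    rintro z ⟨hzT0, hzm⟩
    obtain ⟨zh, hzh, rfl⟩ := hzT0
    set u : ↥T0sub := ⟨zh, hzh⟩ with hu
    have hun : u ^ p ^ m = 1 := by
      apply Subtype.ext; apply Subtype.ext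
      simpa using hzm
    refine ⟨e0 u, ?_, ?_⟩
    · show (e0 u) ^ p ^ m = 1
      rw [← map_pow, hun, map_one]
    · show (((e0.symm (e0 u) : ↥T0sub) : ↥Pbold) : G) = _
      rw [e0.symm_apply_apply]
      rfl
  haveI : Finite (↥Pbold ⧸ T0sub) := hfinQ0
  set N0 := Nat.card (↥Pbold ⧸ T0sub) with hN0def
  have hN00 : N0 ≠ 0 := Nat.card_pos.ne'
  have hNT0 : ∀ x ∈ Pbold, x ^ N0 ∈ T0 := by
    intro x hx
    have h1 : (QuotientGroup.mk (⟨x, hx⟩ : ↥Pbold) : ↥Pbold ⧸ T0sub) ^ N0 = 1 :=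
      pow_card_eq_one'
    rw [← QuotientGroup.mk_pow, QuotientGroup.eq_one_iff] at h1
    exact ⟨_, h1, by simp⟩
  have L1P := OutIsoAux.torsion_mem_of_max P Pbold T0 hPmax hT0le hcomm hinvPb hfinT
    N0 hN00 hNT0
  set A : Subgroup G :=
    { carrier := {z : G | z ∈ T0 ∧ ∃ m : ℕ, z ^ p ^ m = 1}
      one_mem' := ⟨one_mem T0, 0, one_pow _⟩
      mul_mem' := by
        rintro a b ⟨haT, ma, ha⟩ ⟨hbT, mb, hb⟩
        refine ⟨mul_mem haT hbT, ma + mb, ?_⟩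
        have hc : Commute a b := hcomm a haT b hbT
        rw [hc.mul_pow]
        have e1 : a ^ p ^ (ma + mb) = 1 := by
          rw [pow_add, pow_mul, ha, one_pow]
        have e2 : b ^ p ^ (ma + mb) = 1 := by
          rw [add_comm, pow_add, pow_mul, hb, one_pow]
        rw [e1, e2, one_mul]
      inv_mem' := by
        rintro a ⟨haT, ma, ha⟩
        exact ⟨inv_mem haT, ma, by rw [inv_pow, ha, inv_one]⟩ } with hAdef
  have hAmem : ∀ z : G, z ∈ A ↔ z ∈ T0 ∧ ∃ m : ℕ, z ^ p ^ m = 1 := fun z => Iff.rfl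
  have hAP : A ≤ P := by
    intro z hz
    obtain ⟨hzT0, m, hm⟩ := (hAmem z).mp hz
    exact L1P z hzT0 m hm
  have hPtor : ∀ x ∈ P, ∃ m : ℕ, x ^ p ^ m = 1 := OutIsoAux.dpt_torsion hPdpt
  have hPT0 : ∀ g ∈ P, ∀ x ∈ T0, g * x * g⁻¹ ∈ T0 := fun g hg => hinvPb g (hPle hg)
  have hfinQt : Finite (↥P ⧸ A.subgroupOf P) := by
    have hwd : ∀ x y : ↥P, (QuotientGroup.leftRel (A.subgroupOf P)) x y →
        (QuotientGroup.leftRel T0sub) (Subgroup.inclusion hPle x)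
          (Subgroup.inclusion hPle y) := by
      intro x y hxy
      rw [QuotientGroup.leftRel_apply] at hxy ⊢
      rw [Subgroup.mem_subgroupOf] at hxy
      obtain ⟨hT0m, -⟩ := (hAmem _).mp hxy
      obtain ⟨zh, hzh, hzv⟩ := hT0m
      have hv2 : (zh : G) = ((x⁻¹ * y : ↥P) : G) := hzv
      have heq1 : (Subgroup.inclusion hPle x)⁻¹ * Subgroup.inclusion hPle y = zh := by
        apply Subtype.ext
        rw [hv2]
        simp [Subgroup.coe_inclusion]
      rw [heq1]
      exact hzh
    set F : (↥P ⧸ A.subgroupOf P) → (↥Pbold ⧸ T0sub) :=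
      Quotient.map' (fun x => Subgroup.inclusion hPle x) hwd with hF
    have hinj : Function.Injective F := by
      intro q1 q2
      induction q1 using QuotientGroup.induction_on with
      | H x =>
        induction q2 using QuotientGroup.induction_on with
        | H y =>
          intro h
          have h1 : (QuotientGroup.mk (Subgroup.inclusion hPle x) : ↥Pbold ⧸ T0sub)
              = QuotientGroup.mk (Subgroup.inclusion hPle y) := h
          have h2 := QuotientGroup.eq.mp h1
          apply QuotientGroup.eq.mpr
          rw [Subgroup.mem_subgroupOf]
          have h3 : ((x⁻¹ * y : ↥P) : G) ∈ T0 := by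
            refine ⟨(Subgroup.inclusion hPle x)⁻¹ * Subgroup.inclusion hPle y, h2, ?_⟩
            simp [Subgroup.coe_inclusion]
          exact (hAmem _).mpr ⟨h3, hPtor _ (x⁻¹ * y).2⟩
    exact Finite.of_injective F hinj
  have hT0subclosed : IsClosed (T0sub : Set ↥Pbold) := isClosed_connectedComponent
  have hopen : IsOpen (T0sub : Set ↥Pbold) := by
    rw [← isClosed_compl_iff]
    have hcompl : (T0sub : Set ↥Pbold)ᶜ
        = ⋃ (q : {q : ↥Pbold ⧸ T0sub // q ≠ 1}),
            {z : ↥Pbold | QuotientGroup.mk z = q.1} := by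
      ext z
      simp only [Set.mem_compl_iff, SetLike.mem_coe, Set.mem_iUnion, Set.mem_setOf_eq]
      constructor
      · intro hz
        exact ⟨⟨QuotientGroup.mk z, by rwa [Ne, QuotientGroup.eq_one_iff]⟩, rfl⟩
      · rintro ⟨⟨q, hq⟩, rfl⟩
        rwa [Ne, QuotientGroup.eq_one_iff] at hq
    rw [hcompl]
    apply isClosed_iUnion_of_finite
    intro q
    have hfib : {z : ↥Pbold | QuotientGroup.mk z = q.1}
        = (fun z : ↥Pbold => (Quotient.out q.1)⁻¹ * z) ⁻¹' (T0sub : Set ↥Pbold) := by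
      ext z
      simp only [Set.mem_setOf_eq, Set.mem_preimage, SetLike.mem_coe]
      constructor
      · intro h
        apply (QuotientGroup.eq).mp
        rw [QuotientGroup.out_eq', h]
      · intro h
        have h2 := (QuotientGroup.eq).mpr h
        rw [QuotientGroup.out_eq'] at h2
        exact h2.symm
    rw [hfib]
    exact IsClosed.preimage (continuous_mul_left _) hT0subclosed
  have hdec : ∀ P2 : Subgroup G, P2.topologicalClosure = Pbold →
      ∀ x ∈ Pbold, ∃ a ∈ P2, ∃ s ∈ T0, x = a * s := by
    intro P2 hP2cl x hx
    have hP2le : P2 ≤ Pbold := by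
      rw [← hP2cl]; exact Subgroup.le_topologicalClosure P2
    have hV : IsOpen ((fun z : ↥Pbold => (⟨x, hx⟩ : ↥Pbold)⁻¹ * z) ⁻¹'
        (T0sub : Set ↥Pbold)) :=
      IsOpen.preimage (continuous_mul_left _) hopen
    obtain ⟨W, hWopen, hWeq⟩ := isOpen_induced_iff.mp hV
    have hxW : x ∈ W := by
      have h1 : (⟨x, hx⟩ : ↥Pbold) ∈ Subtype.val ⁻¹' W := by
        rw [hWeq]
        show (⟨x, hx⟩ : ↥Pbold)⁻¹ * ⟨x, hx⟩ ∈ T0sub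
        rw [inv_mul_cancel]
        exact one_mem _
      exact h1
    have hxcl : x ∈ closure (P2 : Set G) := by
      rw [← Subgroup.topologicalClosure_coe, hP2cl]
      exact hx
    obtain ⟨a, haW, haP2⟩ := mem_closure_iff.mp hxcl W hWopen hxW
    have haPb : a ∈ Pbold := hP2le haP2
    have h2 : (⟨a, haPb⟩ : ↥Pbold) ∈ Subtype.val ⁻¹' W := haW
    rw [hWeq] at h2
    have hmem : x⁻¹ * a ∈ T0 := ⟨(⟨x, hx⟩ : ↥Pbold)⁻¹ * ⟨a, haPb⟩, h2, by push_cast; rfl⟩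
    refine ⟨a, haP2, a⁻¹ * x, ?_, by group⟩
    have h3 := inv_mem hmem
    simpa using h3
  have hcentEq : Subgroup.centralizer (P : Set G) = Subgroup.centralizer (Pbold : Set G) := by
    have h1 := OutIsoAux.centralizer_topClosure (G := G) P
    rwa [hPcl] at h1
  refine ⟨OutIsoAux.normalizer_le_of_dense hPcl, hcentEq, ?_, ?_⟩
  · -- injectivity
    intro n hn hmem
    rw [Set.mem_mul] at hmem
    obtain ⟨c, hc, b, hb, hcb⟩ := hmem
    have hcP : c ∈ Subgroup.centralizer (P : Set G) := by
      rw [hcentEq]; exact hc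
    have hbN : b ∈ Subgroup.normalizer (P : Set G) := by
      have h1 : c⁻¹ * n ∈ Subgroup.normalizer (P : Set G) :=
        mul_mem (inv_mem (OutIsoAux.cent_le_norm P hcP)) hn
      have e1 : b = c⁻¹ * n := by rw [← hcb]; group
      rwa [← e1] at h1
    obtain ⟨a, haP, t, htT0, hbat⟩ := hdec P hPcl b hb
    have htN : t ∈ Subgroup.normalizer (P : Set G) := by
      have h1 : a⁻¹ * b ∈ Subgroup.normalizer (P : Set G) :=
        mul_mem (inv_mem (Subgroup.le_normalizer haP)) hbN
      have e1 : t = a⁻¹ * b := by rw [hbat]; group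
      rwa [← e1] at h1
    have htP : ∀ y, y ∈ P ↔ t * y * t⁻¹ ∈ P := Subgroup.mem_normalizer_iff.mp htN
    obtain ⟨a0, ha0A, hconj⟩ :=
      OutIsoAux.key3 P T0 A hcomm hdivT0 hAmem hPT0 hPtor hfinQt t htT0 htP
    have hc0 : a0⁻¹ * t ∈ Subgroup.centralizer (P : Set G) := by
      rw [Subgroup.mem_centralizer_iff]
      intro y hy
      have h2 := hconj y hy
      calc y * (a0⁻¹ * t) = a0⁻¹ * (a0 * y * a0⁻¹) * t := by group
        _ = a0⁻¹ * (t * y * t⁻¹) * t := by rw [h2]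
        _ = (a0⁻¹ * t) * y := by group
    have hq1P : a * a0 ∈ P := mul_mem haP (hAP ha0A)
    have hc1 : c * ((a * a0) * (a0⁻¹ * t) * (a * a0)⁻¹)
        ∈ Subgroup.centralizer (P : Set G) :=
      mul_mem hcP (OutIsoAux.conj_mem_centralizer hc0 hq1P)
    rw [Set.mem_mul]
    refine ⟨c * ((a * a0) * (a0⁻¹ * t) * (a * a0)⁻¹), hc1, a * a0, hq1P, ?_⟩
    rw [← hcb, hbat]
    group
  · -- surjectivity
    intro g hg
    set P' : Subgroup G := P.map (MulAut.conj g).toMonoidHom with hP'def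
    have hgiff := Subgroup.mem_normalizer_iff.mp hg
    have hmapPb : Pbold.map (MulAut.conj g).toMonoidHom = Pbold := by
      ext x
      rw [OutIsoAux.mem_conj_map]
      constructor
      · intro h
        have h1 := (hgiff (g⁻¹ * x * g)).mp h
        simpa [mul_assoc] using h1
      · intro h
        apply (hgiff (g⁻¹ * x * g)).mpr
        simpa [mul_assoc] using h
    have hP'cl : P'.topologicalClosure = Pbold := by
      rw [hP'def, OutIsoAux.conj_topClosure, hPcl, hmapPb]
    have hP'max : IsMaxDiscretePToralIn p P' Pbold := OutIsoAux.max_conj hg hPmax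
    have hP'le : P' ≤ Pbold := hP'max.1
    have hP'dpt := hP'max.2.1
    have hP'tor : ∀ x ∈ P', ∃ m : ℕ, x ^ p ^ m = 1 := OutIsoAux.dpt_torsion hP'dpt
    have L1P' := OutIsoAux.torsion_mem_of_max P' Pbold T0 hP'max hT0le hcomm hinvPb hfinT
      N0 hN00 hNT0
    have hAP' : A ≤ P' := by
      intro z hz
      obtain ⟨hzT0, m, hm⟩ := (hAmem z).mp hz
      exact L1P' z hzT0 m hm
    have hdecP' : ∀ x ∈ P, ∃ a ∈ P', ∃ s ∈ T0, x = a * s :=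
      fun x hx => hdec P' hP'cl x (hPle hx)
    obtain ⟨σ, hσT0, hσ⟩ := OutIsoAux.key4 P P' T0 A hcomm hdivT0 hAmem hAP' hPT0
      hPtor hP'tor hfinQt hdecP'
    have hσPb : σ ∈ Subgroup.normalizer (Pbold : Set G) := Subgroup.le_normalizer (hT0le hσT0)
    have hmaxσ := OutIsoAux.max_conj hσPb hPmax
    have hle : P.map (MulAut.conj σ).toMonoidHom ≤ P' := by
      rintro x ⟨y, hy, rfl⟩
      have h1 := hσ y hy
      simpa [MulAut.conj_apply] using h1
    have hP'eq : P' = P.map (MulAut.conj σ).toMonoidHom := hmaxσ.2.2 P' hP'le hP'dpt hle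
    refine ⟨σ⁻¹ * g, ?_, ?_⟩
    · rw [Subgroup.mem_normalizer_iff]
      intro h
      have e : (σ⁻¹ * g) * h * (σ⁻¹ * g)⁻¹ = σ⁻¹ * (g * h * g⁻¹) * σ := by group
      rw [e]
      constructor
      · intro hh
        have h1 : g * h * g⁻¹ ∈ P' := ⟨h, hh, rfl⟩
        rw [hP'eq, OutIsoAux.mem_conj_map] at h1
        simpa [mul_assoc] using h1
      · intro hh
        have h1 : g * h * g⁻¹ ∈ P.map (MulAut.conj σ).toMonoidHom := by
          rw [OutIsoAux.mem_conj_map]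
          simpa [mul_assoc] using hh
        rw [← hP'eq, hP'def, OutIsoAux.mem_conj_map] at h1
        simpa [mul_assoc] using h1
    · have e : (σ⁻¹ * g)⁻¹ * g = g⁻¹ * σ * g := by group
      rw [e]
      have hmem2 : g⁻¹ * σ * g ∈ Pbold := by
        apply (hgiff (g⁻¹ * σ * g)).mpr
        have e2 : g * (g⁻¹ * σ * g) * g⁻¹ = σ := by group
        rw [e2]
        exact hT0le hσT0
      have h1 : (1 : G) ∈ (Subgroup.centralizer (Pbold : Set G) : Set G) :=
        Subgroup.one_mem _
      have h2 := Set.mul_mem_mul h1 hmem2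
      simpa using h2

end
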